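/- Suppose (L,σ) ∈ C¹(𝒢,iso(𝒩)) × C²(𝒢,𝒩) satisfies only the twisted action condition (F1) (not necessarily (F2)). Then for every composable triple (x,y,z), the element χ(x,y,z) := L_x(σ(y,z))σ(x,yz)σ(xy,z)⁻¹σ(x,y)⁻¹ lies in the center Z(N_{r(x)}). -/

import Mathlib

/-- A groupoid over a unit space `U`, with a total (junk-valued outside composables)
multiplication. `e : U → G` is the inclusion of units. -/
structure Gpd (G U : Type) where
  s : G → U
  r : G → U
  e : U → G
  mul : G → G → G
  inv : G → G
  s_e : ∀ u, s (e u) = u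
  r_e : ∀ u, r (e u) = u
  e_mul : ∀ x, mul (e (r x)) x = x
  mul_e : ∀ x, mul x (e (s x)) = x
  s_inv : ∀ x, s (inv x) = r x
  r_inv : ∀ x, r (inv x) = s x
  inv_mul : ∀ x, mul (inv x) x = e (s x)
  mul_inv : ∀ x, mul x (inv x) = e (r x)
  r_mul : ∀ x y, s x = r y → r (mul x y) = r x
  s_mul : ∀ x y, s x = r y → s (mul x y) = s y
  assoc : ∀ x y z, s x = r y → s y = r z → mul (mul x y) z = mul x (mul y z)

/-- A group bundle over `U`: a total space `N` with projection `p`, each fiber being a group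
(operations are total, with group laws holding fiberwise). -/
structure GrpBundle (N U : Type) where
  p : N → U
  one : U → N
  mul : N → N → N
  inv : N → N
  p_one : ∀ u, p (one u) = u
  p_mul : ∀ n m, p n = p m → p (mul n m) = p n
  p_inv : ∀ n, p (inv n) = p n
  one_mul : ∀ n, mul (one (p n)) n = n
  mul_one : ∀ n, mul n (one (p n)) = n
  inv_mul : ∀ n, mul (inv n) n = one (p n)
  mul_inv : ∀ n, mul n (inv n) = one (p n)
  assoc : ∀ a b c, p a = p b → p b = p c → mul (mul a b) c = mul a (mul b c)

/-- A pair `(L, σ)` satisfying all the conditions of a factor system for `(𝒢, 𝒩)` except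
possibly the twisted cocycle condition (F2): `L` is a family of fiberwise group isomorphisms
`L x : N_{s x} → N_{r x}`, trivial on units, and `σ : 𝒢⁽²⁾ → 𝒩` is normalized with
`σ (x, y) ∈ N_{r x}`, satisfying the twisted action condition (F1). -/
structure PreFS {G U N : Type} (𝒢 : Gpd G U) (𝒩 : GrpBundle N U) where
  L : G → N → N
  σ : G → G → N
  L_fib : ∀ x n, 𝒩.p n = 𝒢.s x → 𝒩.p (L x n) = 𝒢.r x
  L_mul : ∀ x n m, 𝒩.p n = 𝒢.s x → 𝒩.p m = 𝒢.s x →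
    L x (𝒩.mul n m) = 𝒩.mul (L x n) (L x m)
  L_bij : ∀ x, Set.BijOn (L x) {n | 𝒩.p n = 𝒢.s x} {n | 𝒩.p n = 𝒢.r x}
  L_e : ∀ u n, 𝒩.p n = u → L (𝒢.e u) n = n
  σ_fib : ∀ x y, 𝒢.s x = 𝒢.r y → 𝒩.p (σ x y) = 𝒢.r x
  σ_e_left : ∀ x, σ (𝒢.e (𝒢.r x)) x = 𝒩.one (𝒢.r x)
  σ_e_right : ∀ x, σ x (𝒢.e (𝒢.s x)) = 𝒩.one (𝒢.r x)
  F1 : ∀ x y n, 𝒢.s x = 𝒢.r y → 𝒩.p n = 𝒢.s y →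
    L x (L y n) = 𝒩.mul (𝒩.mul (σ x y) (L (𝒢.mul x y) n)) (𝒩.inv (σ x y))

/-- A factor system `(L, σ)` for `(𝒢, 𝒩)`: conditions (F1) and (F2). -/
structure FS {G U N : Type} (𝒢 : Gpd G U) (𝒩 : GrpBundle N U) extends PreFS 𝒢 𝒩 where
  F2 : ∀ x y z, 𝒢.s x = 𝒢.r y → 𝒢.s y = 𝒢.r z →
    𝒩.mul (σ x y) (σ (𝒢.mul x y) z) = 𝒩.mul (L x (σ y z)) (σ x (𝒢.mul y z))

/-- `χ_{(L,σ)}(x,y,z) = L_x(σ(y,z)) σ(x,yz) σ(xy,z)⁻¹ σ(x,y)⁻¹`. -/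
def chi {G U N : Type} (𝒢 : Gpd G U) (𝒩 : GrpBundle N U)
    (L : G → N → N) (σ : G → G → N) (x y z : G) : N :=
  𝒩.mul (𝒩.mul (𝒩.mul (L x (σ y z)) (σ x (𝒢.mul y z)))
    (𝒩.inv (σ (𝒢.mul x y) z))) (𝒩.inv (σ x y))

/-- The fiber of a group bundle over a point `u`. -/
def Fib {N U : Type} (𝒩 : GrpBundle N U) (u : U) : Type := {n : N // 𝒩.p n = u}

instance FibGroup {N U : Type} (𝒩 : GrpBundle N U) (u : U) : Group (Fib 𝒩 u) where
  mul a b := ⟨𝒩.mul a.1 b.1, by rw [𝒩.p_mul a.1 b.1 (by rw [a.2, b.2])]; exact a.2⟩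
  one := ⟨𝒩.one u, 𝒩.p_one u⟩
  inv a := ⟨𝒩.inv a.1, by rw [𝒩.p_inv]; exact a.2⟩
  mul_assoc a b c := Subtype.ext (𝒩.assoc a.1 b.1 c.1 (by rw [a.2, b.2]) (by rw [b.2, c.2]))
  one_mul a := Subtype.ext (by have h := 𝒩.one_mul a.1; rw [a.2] at h; exact h)
  mul_one a := Subtype.ext (by have h := 𝒩.mul_one a.1; rw [a.2] at h; exact h)
  inv_mul_cancel a := Subtype.ext (by have h := 𝒩.inv_mul a.1; rw [a.2] at h; exact h)

@[simp] lemma Fib.mul_val {N U : Type} {𝒩 : GrpBundle N U} {u : U} (a b : Fib 𝒩 u) :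
    (a * b).1 = 𝒩.mul a.1 b.1 := rfl

@[simp] lemma Fib.inv_val {N U : Type} {𝒩 : GrpBundle N U} {u : U} (a : Fib 𝒩 u) :
    (a⁻¹).1 = 𝒩.inv a.1 := rfl

@[simp] lemma Fib.one_val {N U : Type} {𝒩 : GrpBundle N U} {u : U} :
    (1 : Fib 𝒩 u).1 = 𝒩.one u := rfl

lemma L_one {G U N : Type} {𝒢 : Gpd G U} {𝒩 : GrpBundle N U} (P : PreFS 𝒢 𝒩) (x : G) :
    P.L x (𝒩.one (𝒢.s x)) = 𝒩.one (𝒢.r x) := by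
  have hp : 𝒩.p (𝒩.one (𝒢.s x)) = 𝒢.s x := 𝒩.p_one _
  set o : Fib 𝒩 (𝒢.r x) := ⟨P.L x (𝒩.one (𝒢.s x)), P.L_fib x _ hp⟩ with ho
  have h : o * o = o := by
    apply Subtype.ext
    show 𝒩.mul (P.L x (𝒩.one (𝒢.s x))) (P.L x (𝒩.one (𝒢.s x))) = P.L x (𝒩.one (𝒢.s x))
    rw [← P.L_mul x _ _ hp hp]
    congr 1
    have := 𝒩.one_mul (𝒩.one (𝒢.s x)); rwa [hp] at this
  have h1 : o = 1 := by
    have := mul_right_cancel (b := o) (a := o) (c := 1) (by rw [h, one_mul])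
    exact this
  exact congrArg Subtype.val h1

lemma L_inv {G U N : Type} {𝒢 : Gpd G U} {𝒩 : GrpBundle N U} (P : PreFS 𝒢 𝒩) (x : G)
    (n : N) (hn : 𝒩.p n = 𝒢.s x) :
    P.L x (𝒩.inv n) = 𝒩.inv (P.L x n) := by
  have hpi : 𝒩.p (𝒩.inv n) = 𝒢.s x := by rw [𝒩.p_inv]; exact hn
  set a : Fib 𝒩 (𝒢.r x) := ⟨P.L x n, P.L_fib x n hn⟩ with ha
  set b : Fib 𝒩 (𝒢.r x) := ⟨P.L x (𝒩.inv n), P.L_fib x _ hpi⟩ with hb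
  have h : a * b = 1 := by
    apply Subtype.ext
    show 𝒩.mul (P.L x n) (P.L x (𝒩.inv n)) = 𝒩.one (𝒢.r x)
    rw [← P.L_mul x n _ hn hpi]
    have h2 : 𝒩.mul n (𝒩.inv n) = 𝒩.one (𝒢.s x) := by
      have := 𝒩.mul_inv n; rwa [hn] at this
    rw [h2, L_one P x]
  have h1 : b = a⁻¹ := (inv_eq_of_mul_eq_one_right h).symm
  exact congrArg Subtype.val h1

/-- If `(L,σ)` satisfies the twisted action condition (F1) (but not
necessarily (F2)), then for every composable triple `(x,y,z)` the element
`χ(x,y,z) = L_x(σ(y,z)) σ(x,yz) σ(xy,z)⁻¹ σ(x,y)⁻¹` is central in the fiber `N_{r x}`. -/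
theorem stmt11 {G U N : Type} (𝒢 : Gpd G U) (𝒩 : GrpBundle N U) (P : PreFS 𝒢 𝒩) :
    ∀ x y z, 𝒢.s x = 𝒢.r y → 𝒢.s y = 𝒢.r z →
      ∀ m, 𝒩.p m = 𝒢.r x →
        𝒩.mul (chi 𝒢 𝒩 P.L P.σ x y z) m = 𝒩.mul m (chi 𝒢 𝒩 P.L P.σ x y z) := by
  intro x y z hxy hyz m hm
  -- source/range bookkeeping
  have hsyz : 𝒢.s x = 𝒢.r (𝒢.mul y z) := by rw [𝒢.r_mul y z hyz]; exact hxy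
  have hsxy : 𝒢.s (𝒢.mul x y) = 𝒢.r z := by rw [𝒢.s_mul x y hxy]; exact hyz
  have hrxy : 𝒢.r (𝒢.mul x y) = 𝒢.r x := 𝒢.r_mul x y hxy
  have hrbig : 𝒢.r (𝒢.mul (𝒢.mul x y) z) = 𝒢.r x := by
    rw [𝒢.r_mul _ z hsxy, hrxy]
  have hsbig : 𝒢.s (𝒢.mul (𝒢.mul x y) z) = 𝒢.s z := 𝒢.s_mul _ z hsxy
  have hsyz' : 𝒢.s (𝒢.mul y z) = 𝒢.s z := 𝒢.s_mul y z hyz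
  -- the four factors of χ, as elements of the fiber over r x
  have hpσyz : 𝒩.p (P.σ y z) = 𝒢.s x := by rw [P.σ_fib y z hyz]; exact hxy.symm ▸ rfl
  have hpA : 𝒩.p (P.L x (P.σ y z)) = 𝒢.r x := P.L_fib x _ hpσyz
  have hpB : 𝒩.p (P.σ x (𝒢.mul y z)) = 𝒢.r x := P.σ_fib x _ hsyz
  have hpC : 𝒩.p (P.σ (𝒢.mul x y) z) = 𝒢.r x := by
    rw [P.σ_fib _ z hsxy]; exact hrxy
  have hpD : 𝒩.p (P.σ x y) = 𝒢.r x := P.σ_fib x y hxy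
  set A : Fib 𝒩 (𝒢.r x) := ⟨P.L x (P.σ y z), hpA⟩ with hA
  set B : Fib 𝒩 (𝒢.r x) := ⟨P.σ x (𝒢.mul y z), hpB⟩ with hB
  set C : Fib 𝒩 (𝒢.r x) := ⟨P.σ (𝒢.mul x y) z, hpC⟩ with hC
  set D : Fib 𝒩 (𝒢.r x) := ⟨P.σ x y, hpD⟩ with hD
  set M : Fib 𝒩 (𝒢.r x) := ⟨m, hm⟩ with hM
  -- key lemma: for every M'' in the fiber, A (B M'' B⁻¹) A⁻¹ = D (C M'' C⁻¹) D⁻¹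
  have key : ∀ M'' : Fib 𝒩 (𝒢.r x),
      A * (B * M'' * B⁻¹) * A⁻¹ = D * (C * M'' * C⁻¹) * D⁻¹ := by
    intro M''
    -- surjectivity of L over the long arrow
    obtain ⟨n, hn, hLn⟩ := (P.L_bij (𝒢.mul (𝒢.mul x y) z)).surjOn
      (show M''.1 ∈ {v | 𝒩.p v = 𝒢.r (𝒢.mul (𝒢.mul x y) z)} by
        show 𝒩.p M''.1 = _; rw [M''.2, hrbig])
    have hn' : 𝒩.p n = 𝒢.s z := by
      have : 𝒩.p n = 𝒢.s (𝒢.mul (𝒢.mul x y) z) := hn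
      rwa [hsbig] at this
    have hLzn : 𝒩.p (P.L z n) = 𝒢.s y := by
      rw [P.L_fib z n hn']; exact hyz.symm
    have hLyzn : 𝒩.p (P.L (𝒢.mul y z) n) = 𝒢.s x := by
      rw [P.L_fib _ n (by rw [hn', hsyz'])]; exact hsyz.symm
    -- RHS value: D (C M'' C⁻¹) D⁻¹ = L x (L y (L z n))
    have hRHS : (D * (C * M'' * C⁻¹) * D⁻¹).1 = P.L x (P.L y (P.L z n)) := by
      have h1 : (C * M'' * C⁻¹).1 = P.L (𝒢.mul x y) (P.L z n) := by
        show 𝒩.mul (𝒩.mul (P.σ (𝒢.mul x y) z) M''.1) (𝒩.inv (P.σ (𝒢.mul x y) z)) = _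
        rw [← hLn]
        exact (P.F1 (𝒢.mul x y) z n hsxy hn').symm
      show 𝒩.mul (𝒩.mul (P.σ x y) (C * M'' * C⁻¹).1) (𝒩.inv (P.σ x y)) = _
      rw [h1]
      exact (P.F1 x y (P.L z n) hxy hLzn).symm
    -- LHS value: A (B M'' B⁻¹) A⁻¹ = L x (L y (L z n))
    have hLHS : (A * (B * M'' * B⁻¹) * A⁻¹).1 = P.L x (P.L y (P.L z n)) := by
      have h1 : (B * M'' * B⁻¹).1 = P.L x (P.L (𝒢.mul y z) n) := by
        show 𝒩.mul (𝒩.mul (P.σ x (𝒢.mul y z)) M''.1) (𝒩.inv (P.σ x (𝒢.mul y z))) = _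
        rw [← hLn, 𝒢.assoc x y z hxy hyz]
        exact (P.F1 x (𝒢.mul y z) n hsyz (by rw [hn', hsyz'])).symm
      show 𝒩.mul (𝒩.mul (P.L x (P.σ y z)) (B * M'' * B⁻¹).1)
          (𝒩.inv (P.L x (P.σ y z))) = _
      rw [h1, ← L_inv P x _ hpσyz,
        ← P.L_mul x _ _ hpσyz hLyzn,
        ← P.L_mul x _ _ (by rw [𝒩.p_mul _ _ (hpσyz.trans hLyzn.symm)]; exact hpσyz)
          (by rw [𝒩.p_inv]; exact hpσyz),
        ← P.F1 y z n hyz hn']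
    exact Subtype.ext (hLHS.trans hRHS.symm)
  -- conclude commutation in the fiber group
  have hcomm : (A * B * C⁻¹ * D⁻¹) * M = M * (A * B * C⁻¹ * D⁻¹) := by
    have hconj : (A * B * C⁻¹ * D⁻¹) * M * (A * B * C⁻¹ * D⁻¹)⁻¹ = M := by
      have h2 : (A * B * C⁻¹ * D⁻¹) * M * (A * B * C⁻¹ * D⁻¹)⁻¹ =
          A * (B * (C⁻¹ * (D⁻¹ * M * D) * C) * B⁻¹) * A⁻¹ := by group
      rw [h2, key (C⁻¹ * (D⁻¹ * M * D) * C)]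
      group
    calc (A * B * C⁻¹ * D⁻¹) * M
        = ((A * B * C⁻¹ * D⁻¹) * M * (A * B * C⁻¹ * D⁻¹)⁻¹) * (A * B * C⁻¹ * D⁻¹) := by
          group
      _ = M * (A * B * C⁻¹ * D⁻¹) := by rw [hconj]
  have := congrArg Subtype.val hcomm
  simp only [chi]
  exact this
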